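/- Let f : F_2^k → F_2. Then f is an almost lifting (i.e., sup_{n≥k} max_y |F^{-1}(y)| < ∞) if and only if the non-wrapping induced map F_{(m)} : F_2^m → F_2^{m-k+1} is balanced for every m ≥ k. -/

import Mathlib

/-- The cyclic (shift-invariant, periodic boundary) map on `n` bits induced by a
Boolean function `f` on `k` bits. -/
def cyc {k n : ℕ} (f : (Fin k → Bool) → Bool) (x : Fin n → Bool) : Fin n → Bool :=
  fun i => f fun j => x ⟨(i.val + j.val) % n, Nat.mod_lt _ i.pos⟩

/-- The non-wrapping induced map `F_{(m)} : F_2^m → F_2^{m-k+1}`. -/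
def ncyc {k m : ℕ} (hk : k ≤ m) (f : (Fin k → Bool) → Bool) (x : Fin m → Bool) :
    Fin (m - k + 1) → Bool :=
  fun i => f fun j => x ⟨i.val + j.val, by have h1 := i.isLt; have h2 := j.isLt; omega⟩

open Finset

lemma bern (a : ℕ) : ∀ n : ℕ, (a + n) * a ^ n ≤ (a + 1) ^ n * a := by
  intro n
  induction n with
  | zero => simp
  | succ n ih =>
    have hp : a ^ n ≤ (a+1) ^ n := Nat.pow_le_pow_left (by omega) n
    calc (a + (n+1)) * a ^ (n+1) = ((a+n) * a ^ n) * a + a ^ n * a := by ring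
    _ ≤ ((a+1)^n * a) * a + (a+1)^n * a := by
        exact Nat.add_le_add (Nat.mul_le_mul_right a ih) (Nat.mul_le_mul_right a hp)
    _ = (a+1)^(n+1) * a := by ring

lemma arith (a L : ℕ) (ha : 1 ≤ a) : ∃ t, 1 ≤ t ∧ L * a ^ t < (a + 1) ^ t := by
  refine ⟨(L+1)*a, by nlinarith, ?_⟩
  have h := bern a ((L+1)*a)
  have hpow : 0 < a ^ ((L+1)*a) := Nat.pow_pos ha
  nlinarith [h, hpow]

lemma idx {t m : ℕ} (j : Fin t) (r : ℕ) (hr : r < m) : j.val * m + r < t * m := by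
  have h1 : (j.val + 1) * m ≤ t * m := Nat.mul_le_mul_right m j.isLt
  have h2 : (j.val + 1) * m = j.val * m + m := by ring
  omega

/-- block j of x -/
def blk {t m : ℕ} (x : Fin (t*m) → Bool) (j : Fin t) : Fin m → Bool :=
  fun p => x ⟨j.val * m + p.val, idx j p.val p.isLt⟩

lemma cyc_blk {k m t : ℕ} (hk : 1 ≤ k) (hm : k ≤ m) (f : (Fin k → Bool) → Bool)
    (x : Fin (t*m) → Bool) (j : Fin t) (p : Fin (m-k+1)) :
    cyc f x ⟨j.val * m + p.val, idx j p.val (by omega)⟩ = ncyc hm f (blk x j) p := by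
  show f _ = f _
  congr 1
  funext q
  apply congrArg x
  apply Fin.ext
  show (j.val * m + p.val + q.val) % (t*m) = j.val * m + (p.val + q.val)
  have h1 : p.val + q.val < m := by have := p.isLt; have := q.isLt; omega
  have h2 := idx j (p.val + q.val) h1
  rw [Nat.mod_eq_of_lt (by omega)]
  omega

lemma count_blocks {k m t : ℕ} (hk : 1 ≤ k) (hm : k ≤ m) (f : (Fin k → Bool) → Bool)
    (y₀ : Fin (m-k+1) → Bool) :
    (univ.filter fun x : Fin (t*m) → Bool => ∀ j : Fin t, ncyc hm f (blk x j) = y₀).card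
      = (univ.filter fun w : Fin m → Bool => ncyc hm f w = y₀).card ^ t := by
  have hm0 : 0 < m := by omega
  have hpi : (Fintype.piFinset fun _ : Fin t => univ.filter fun w : Fin m → Bool => ncyc hm f w = y₀).card
      = (univ.filter fun w : Fin m → Bool => ncyc hm f w = y₀).card ^ t := by
    rw [Fintype.card_piFinset, Finset.prod_const, Finset.card_univ, Fintype.card_fin]
  rw [← hpi]
  refine Finset.card_nbij' (fun x => blk x)
    (fun g => fun i => g ⟨i.val / m, (Nat.div_lt_iff_lt_mul hm0).mpr i.isLt⟩
      ⟨i.val % m, Nat.mod_lt _ hm0⟩) ?_ ?_ ?_ ?_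
  · intro x hx
    rw [Finset.mem_coe, Fintype.mem_piFinset]
    intro j
    simp only [mem_filter, mem_univ, true_and]
    exact (mem_filter.mp hx).2 j
  · intro g hg
    simp only [Finset.mem_coe, mem_filter, mem_univ, true_and]
    intro j
    rw [Finset.mem_coe, Fintype.mem_piFinset] at hg
    have hmem := mem_filter.mp (hg j)
    have hj : (blk (fun i => g ⟨i.val / m, (Nat.div_lt_iff_lt_mul hm0).mpr i.isLt⟩
        ⟨i.val % m, Nat.mod_lt _ hm0⟩) j) = g j := by
      funext p
      show g _ _ = g j p
      have e1 : (j.val * m + p.val) / m = j.val := by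
        rw [Nat.mul_comm, Nat.mul_add_div hm0, Nat.div_eq_of_lt p.isLt]; omega
      have e2 : (j.val * m + p.val) % m = p.val := by
        rw [Nat.mul_comm, Nat.mul_add_mod, Nat.mod_eq_of_lt p.isLt]
      congr 1 <;> [exact Fin.ext e1; exact Fin.ext e2]
    rw [hj]
    exact hmem.2
  · intro x hx
    funext i
    show x _ = x i
    apply congrArg
    apply Fin.ext
    show i.val / m * m + i.val % m = i.val
    rw [Nat.mul_comm]
    exact Nat.div_add_mod i.val m
  · intro g hg
    funext j p
    show g _ _ = g j p
    have e1 : (j.val * m + p.val) / m = j.val := by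
      rw [Nat.mul_comm, Nat.mul_add_div hm0, Nat.div_eq_of_lt p.isLt]; omega
    have e2 : (j.val * m + p.val) % m = p.val := by
      rw [Nat.mul_comm, Nat.mul_add_mod, Nat.mod_eq_of_lt p.isLt]
    congr 1 <;> [exact Fin.ext e1; exact Fin.ext e2]

def Tset {k m : ℕ} (t : ℕ) (hk : 1 ≤ k) (hm : k ≤ m) (y₀ : Fin (m-k+1) → Bool) :
    Finset (Fin (t*m) → Bool) :=
  univ.filter fun Y => ∀ (j : Fin t) (p : Fin (m-k+1)),
    Y ⟨j.val*m+p.val, idx j p.val (by have := p.isLt; omega)⟩ = y₀ p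

lemma sum_fibers {k m t : ℕ} (hk : 1 ≤ k) (hm : k ≤ m) (f : (Fin k → Bool) → Bool)
    (y₀ : Fin (m-k+1) → Bool) :
    ∑ Y ∈ Tset t hk hm y₀, (univ.filter fun x : Fin (t*m) → Bool => cyc f x = Y).card
      = (univ.filter fun w : Fin m → Bool => ncyc hm f w = y₀).card ^ t := by
  rw [← count_blocks hk hm f y₀]
  set S := univ.filter fun x : Fin (t*m) → Bool => ∀ j : Fin t, ncyc hm f (blk x j) = y₀ with hS
  have hmap : ∀ x ∈ S, cyc f x ∈ Tset t hk hm y₀ := by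
    intro x hx
    rw [Tset, mem_filter]
    refine ⟨mem_univ _, ?_⟩
    intro j p
    have := (mem_filter.mp hx).2 j
    rw [cyc_blk hk hm f x j p, this]
  rw [Finset.card_eq_sum_card_fiberwise hmap]
  apply Finset.sum_congr rfl
  intro Y hY
  congr 1
  ext x
  simp only [hS, mem_filter, mem_univ, true_and]
  constructor
  · intro h
    refine ⟨?_, h⟩
    intro j
    funext p
    rw [← cyc_blk hk hm f x j p, h]
    exact (mem_filter.mp hY).2 j p
  · intro h
    exact h.2

lemma Tset_card {k m t : ℕ} (hk : 1 ≤ k) (hm : k ≤ m) (y₀ : Fin (m-k+1) → Bool) :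
    (Tset t hk hm y₀).card ≤ (2 ^ (k-1)) ^ t := by
  have hm0 : 0 < m := by omega
  have hcard : ((univ : Finset (Fin t → Fin (k-1) → Bool))).card = (2 ^ (k-1)) ^ t := by
    rw [Finset.card_univ]
    rw [Fintype.card_fun, Fintype.card_fun, Fintype.card_bool, Fintype.card_fin, Fintype.card_fin]
  rw [← hcard]
  apply Finset.card_le_card_of_injOn
    (fun Y => fun (j : Fin t) (q : Fin (k-1)) =>
      Y ⟨j.val * m + (m - k + 1 + q.val), idx j _ (by have := q.isLt; omega)⟩)
  · intro Y hY
    exact mem_univ _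
  · intro Y₁ hY₁ Y₂ hY₂ himg
    funext i
    have hj : i.val / m < t := (Nat.div_lt_iff_lt_mul hm0).mpr i.isLt
    have hr : i.val % m < m := Nat.mod_lt _ hm0
    have hi : (i.val / m) * m + i.val % m = i.val := by
      rw [Nat.mul_comm]; exact Nat.div_add_mod i.val m
    by_cases hc : i.val % m < m - k + 1
    · have h1 := (mem_filter.mp hY₁).2 ⟨i.val / m, hj⟩ ⟨i.val % m, hc⟩
      have h2 := (mem_filter.mp hY₂).2 ⟨i.val / m, hj⟩ ⟨i.val % m, hc⟩
      have e : (⟨(i.val / m) * m + i.val % m, idx ⟨i.val / m, hj⟩ _ (by omega)⟩ : Fin (t*m)) = i :=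
        Fin.ext hi
      rw [e] at h1 h2
      rw [h1, h2]
    · have hq : i.val % m - (m - k + 1) < k - 1 := by omega
      have := congrFun (congrFun himg ⟨i.val / m, hj⟩) ⟨i.val % m - (m - k + 1), hq⟩
      simp only at this
      have hv : (i.val / m) * m + (m - k + 1 + (i.val % m - (m - k + 1))) = i.val := by omega
      have e : (⟨(i.val / m) * m + (m - k + 1 + (i.val % m - (m - k + 1))),
          idx ⟨i.val / m, hj⟩ _ (by omega)⟩ : Fin (t*m)) = i := Fin.ext hv
      rw [e] at this
      exact this

lemma total_sum {k m : ℕ} (hm : k ≤ m) (f : (Fin k → Bool) → Bool) :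
    ∑ y : Fin (m-k+1) → Bool, (univ.filter fun x : Fin m → Bool => ncyc hm f x = y).card
      = 2 ^ m := by
  have h := Finset.card_eq_sum_card_fiberwise
    (f := ncyc hm f) (s := (univ : Finset (Fin m → Bool))) (t := univ) (fun x _ => mem_univ _)
  rw [Finset.card_univ, Fintype.card_fun, Fintype.card_bool, Fintype.card_fin] at h
  exact h.symm

lemma exists_big {k m : ℕ} (hk : 1 ≤ k) (hm : k ≤ m) (f : (Fin k → Bool) → Bool)
    (y : Fin (m-k+1) → Bool)
    (hy : (univ.filter fun x : Fin m → Bool => ncyc hm f x = y).card ≠ 2 ^ (k-1)) :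
    ∃ y₀ : Fin (m-k+1) → Bool,
      2 ^ (k-1) < (univ.filter fun x : Fin m → Bool => ncyc hm f x = y₀).card := by
  by_contra hcon
  push_neg at hcon
  have hsum := total_sum hm f
  have hlt : ∑ y' : Fin (m-k+1) → Bool,
      (univ.filter fun x : Fin m → Bool => ncyc hm f x = y').card
      < ∑ _y' : Fin (m-k+1) → Bool, 2 ^ (k-1) := by
    apply Finset.sum_lt_sum (fun y' _ => hcon y')
    exact ⟨y, mem_univ _, lt_of_le_of_ne (hcon y) hy⟩
  rw [Finset.sum_const, Finset.card_univ, Fintype.card_fun, Fintype.card_bool,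
    Fintype.card_fin, smul_eq_mul, hsum] at hlt
  have : 2 ^ (m-k+1) * 2 ^ (k-1) = 2 ^ m := by
    rw [← pow_add]
    congr 1
    omega
  omega

lemma dir1 {k : ℕ} (hk : 1 ≤ k) (f : (Fin k → Bool) → Bool)
    (hbal : ∀ (m : ℕ) (hm : k ≤ m) (y : Fin (m - k + 1) → Bool),
        (Finset.univ.filter fun x : Fin m → Bool => ncyc hm f x = y).card = 2 ^ (k - 1))
    (n : ℕ) (hn : k ≤ n) (y : Fin n → Bool) :
    (univ.filter fun x : Fin n → Bool => cyc f x = y).card ≤ 2 ^ (k-1) := by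
  have hm : k ≤ n + (k-1) := by omega
  have hmk : n + (k-1) - k + 1 = n := by omega
  set m := n + (k-1) with hmdef
  have hn0 : 0 < n := by omega
  rw [← hbal m hm (fun p => y ⟨p.val, by have := p.isLt; omega⟩)]
  apply Finset.card_le_card_of_injOn
    (fun x => fun i : Fin m => x ⟨i.val % n, Nat.mod_lt _ hn0⟩)
  · intro x hx
    rw [Finset.mem_coe, mem_filter] at hx ⊢
    refine ⟨mem_univ _, ?_⟩
    funext p
    have hpn : p.val < n := by have := p.isLt; omega
    have hrfl : ncyc hm f (fun i : Fin m => x ⟨i.val % n, Nat.mod_lt _ hn0⟩) p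
        = cyc f x ⟨p.val, hpn⟩ := rfl
    rw [hrfl, hx.2]
  · intro x₁ h₁ x₂ h₂ himg
    funext i
    have := congrFun himg ⟨i.val, by have := i.isLt; omega⟩
    simp only at this
    have e : (⟨i.val % n, Nat.mod_lt _ hn0⟩ : Fin n) = i :=
      Fin.ext (Nat.mod_eq_of_lt i.isLt)
    rw [e] at this
    exact this


/-- `f` is an almost lifting (the fiber sizes of all cyclic induced maps are
uniformly bounded) iff every non-wrapping induced map `F_{(m)}`, `m ≥ k`, is balanced. -/
theorem stmt8 {k : ℕ} (f : (Fin k → Bool) → Bool) :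
    (∃ L : ℕ, ∀ n : ℕ, k ≤ n → ∀ y : Fin n → Bool,
        (Finset.univ.filter fun x : Fin n → Bool => cyc f x = y).card ≤ L) ↔
    (∀ (m : ℕ) (hm : k ≤ m) (y : Fin (m - k + 1) → Bool),
        (Finset.univ.filter fun x : Fin m → Bool => ncyc hm f x = y).card = 2 ^ (k - 1)) := by
  constructor
  · rintro ⟨L, hL⟩
    by_cases hk : 1 ≤ k
    · intro m hm y
      by_contra hy
      obtain ⟨y₀, hy₀⟩ := exists_big hk hm f y hy
      obtain ⟨t, ht1, ht2⟩ := arith (2 ^ (k-1)) L Nat.one_le_two_pow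
      set c := (univ.filter fun x : Fin m → Bool => ncyc hm f x = y₀).card with hc
      have hsum := sum_fibers (t := t) hk hm f y₀
      have hbd : ∑ Y ∈ Tset t hk hm y₀,
          (univ.filter fun x : Fin (t*m) → Bool => cyc f x = Y).card
          ≤ (Tset t hk hm y₀).card * L := by
        have := Finset.sum_le_card_nsmul (Tset t hk hm y₀)
          (fun Y => (univ.filter fun x : Fin (t*m) → Bool => cyc f x = Y).card) L ?_
        · simpa using this
        · intro Y _
          apply hL (t*m) ?_ Y
          calc k ≤ m := hm
          _ = 1 * m := (one_mul m).symm
          _ ≤ t * m := Nat.mul_le_mul_right m ht1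
      have hTc := Tset_card (t := t) hk hm y₀
      have h1 : (2 ^ (k-1) + 1) ^ t ≤ c ^ t := Nat.pow_le_pow_left hy₀ t
      have h2 : (Tset t hk hm y₀).card * L ≤ (2 ^ (k-1)) ^ t * L :=
        Nat.mul_le_mul_right L hTc
      rw [← hc] at hsum
      have e3 : (2 ^ (k-1) + 1) ^ t ≤ L * (2 ^ (k-1)) ^ t := by
        calc (2 ^ (k-1) + 1) ^ t ≤ c ^ t := h1
        _ = _ := hsum.symm
        _ ≤ (Tset t hk hm y₀).card * L := hbd
        _ ≤ (2 ^ (k-1)) ^ t * L := h2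
        _ = L * (2 ^ (k-1)) ^ t := Nat.mul_comm _ _
      omega
    · exfalso
      have hk0 : k = 0 := by omega
      subst hk0
      have hfib : (univ.filter fun x : Fin (L+1) → Bool =>
          cyc f x = cyc f (fun _ => false)) = univ := by
        apply Finset.filter_true_of_mem
        intro x _
        funext i
        show f _ = f _
        congr 1
        funext j
        exact j.elim0
      have := hL (L+1) (by omega) (cyc f (fun _ => false))
      rw [hfib, Finset.card_univ, Fintype.card_fun, Fintype.card_bool, Fintype.card_fin] at this
      have h2 : L < 2 ^ (L+1) := by
        calc L < 2 ^ L := Nat.lt_two_pow_self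
        _ ≤ 2 ^ (L+1) := Nat.pow_le_pow_right (by omega) (by omega)
      omega
  · intro hbal
    by_cases hk : 1 ≤ k
    · exact ⟨2 ^ (k-1), dir1 hk f hbal⟩
    · exfalso
      have hk0 : k = 0 := by omega
      subst hk0
      have := hbal 0 (le_refl 0) (fun _ => !(f fun j => j.elim0))
      have hemp : (univ.filter fun x : Fin 0 → Bool =>
          ncyc (le_refl 0) f x = fun _ => !(f fun j => j.elim0)) = ∅ := by
        rw [Finset.filter_eq_empty_iff]
        intro x _
        intro hx
        have h0 := congrFun hx ⟨0, by omega⟩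
        have he : (ncyc (le_refl 0) f x) ⟨0, by omega⟩ = f fun j => j.elim0 := by
          show f _ = f _
          congr 1
          funext j
          exact j.elim0
        rw [he] at h0
        simp at h0
      rw [hemp] at this
      simp at this
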